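/- Let n ≥ m ≥ 1 and let A be an m × n nonnegative real matrix whose entries are at most 1 and whose entry sum |A|₁ satisfies |A|₁ ≥ n. Then ‖A‖_{S_1} ≤ |A|₁/√(mn) + √((m-1)(|A|₂² − |A|₁²/(mn))). -/

import Mathlib

open Finset
open Matrix

/-- Singular values (unsorted) of a complex matrix: square roots of eigenvalues of `A * Aᴴ`. -/
noncomputable def svalC {m n : ℕ} (A : Matrix (Fin m) (Fin n) ℂ) : Fin m → ℝ :=
  fun i => Real.sqrt ((Matrix.isHermitian_mul_conjTranspose_self A).eigenvalues i)

/-- Singular values of a complex matrix sorted in decreasing order. -/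
noncomputable def svalCSorted {m n : ℕ} (A : Matrix (Fin m) (Fin n) ℂ) : Fin m → ℝ :=
  svalC A ∘ ⇑(Tuple.sort (fun i => -(svalC A i)))

/-- Singular values (unsorted) of a real matrix. -/
noncomputable def svalR {m n : ℕ} (A : Matrix (Fin m) (Fin n) ℝ) : Fin m → ℝ :=
  fun i => Real.sqrt ((Matrix.isHermitian_mul_conjTranspose_self A).eigenvalues i)

/-- Singular values of a real matrix sorted in decreasing order. -/
noncomputable def svalRSorted {m n : ℕ} (A : Matrix (Fin m) (Fin n) ℝ) : Fin m → ℝ :=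
  svalR A ∘ ⇑(Tuple.sort (fun i => -(svalR A i)))

/-- Ky Fan `k`-norm of a complex matrix: the sum of its `k` largest singular values. -/
noncomputable def kyFanC {m n : ℕ} (A : Matrix (Fin m) (Fin n) ℂ) (k : ℕ) : ℝ :=
  ∑ i : Fin m, if (i : ℕ) < k then svalCSorted A i else 0

/-- Ky Fan `k`-norm of a real matrix. -/
noncomputable def kyFanR {m n : ℕ} (A : Matrix (Fin m) (Fin n) ℝ) (k : ℕ) : ℝ :=
  ∑ i : Fin m, if (i : ℕ) < k then svalRSorted A i else 0

/-- The adjacency matrix of a simple graph is Hermitian (over `ℝ`). -/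
lemma adjHerm {n : ℕ} (G : SimpleGraph (Fin n)) [DecidableRel G.Adj] :
    (G.adjMatrix ℝ).IsHermitian := by
  have h := G.isSymm_adjMatrix (α := ℝ)
  simpa [Matrix.IsHermitian, Matrix.conjTranspose, Matrix.IsSymm, Matrix.transpose, Matrix.map,
    star_trivial] using h

/-- Singular values of a graph (unsorted). -/
noncomputable def gsval {n : ℕ} (G : SimpleGraph (Fin n)) [DecidableRel G.Adj] : Fin n → ℝ :=
  svalR (G.adjMatrix ℝ)

/-- Singular values of a graph sorted in decreasing order. -/
noncomputable def gsvalSorted {n : ℕ} (G : SimpleGraph (Fin n)) [DecidableRel G.Adj] : Fin n → ℝ :=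
  svalRSorted (G.adjMatrix ℝ)

/-- Eigenvalues of a graph sorted in decreasing order: `geigSorted G 0 = μ₁ ≥ ⋯ ≥ μₙ`. -/
noncomputable def geigSorted {n : ℕ} (G : SimpleGraph (Fin n)) [DecidableRel G.Adj] : Fin n → ℝ :=
  (adjHerm G).eigenvalues ∘ ⇑(Tuple.sort (fun i => -((adjHerm G).eigenvalues i)))

/-- Ky Fan `k`-norm of a graph. -/
noncomputable def kyFanG {n : ℕ} (G : SimpleGraph (Fin n)) [DecidableRel G.Adj] (k : ℕ) : ℝ :=
  kyFanR (G.adjMatrix ℝ) k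

lemma sum_eigen_eq_trace {m : ℕ} {B : Matrix (Fin m) (Fin m) ℝ} (hB : B.IsHermitian) :
    ∑ i, hB.eigenvalues i = B.trace := by
  have h := congrArg Matrix.trace hB.spectral_theorem
  rw [Unitary.conjStarAlgAut_apply, Matrix.trace_mul_cycle,
    (Matrix.mem_unitaryGroup_iff').mp hB.eigenvectorUnitary.2, one_mul] at h
  simp only [Matrix.trace_diagonal, Function.comp] at h
  simpa using h.symm

lemma rayleigh_bound {m : ℕ} {B : Matrix (Fin m) (Fin m) ℝ} (hB : B.IsHermitian)
    {μ : ℝ} (hμ : ∀ i, hB.eigenvalues i ≤ μ) (x : Fin m → ℝ) :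
    x ⬝ᵥ (B *ᵥ x) ≤ μ * (x ⬝ᵥ x) := by
  set U : Matrix (Fin m) (Fin m) ℝ := (hB.eigenvectorUnitary : Matrix (Fin m) (Fin m) ℝ)
    with hUdef
  have hU' : U * star U = 1 := (Matrix.mem_unitaryGroup_iff).mp hB.eigenvectorUnitary.2
  set y : Fin m → ℝ := star U *ᵥ x with hy
  have hzy : x ᵥ* U = y := by
    rw [hy, Matrix.star_eq_conjTranspose, Matrix.conjTranspose_eq_transpose_of_trivial,
      Matrix.mulVec_transpose]
  have hxx : x ⬝ᵥ x = y ⬝ᵥ y := by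
    have h2 : (x ᵥ* U) ⬝ᵥ (star U *ᵥ x) = ((x ᵥ* U) ᵥ* star U) ⬝ᵥ x :=
      Matrix.dotProduct_mulVec _ _ _
    rw [Matrix.vecMul_vecMul, hU', Matrix.vecMul_one, hzy, ← hy] at h2
    exact h2.symm
  have hBx : x ⬝ᵥ (B *ᵥ x) = ∑ i, hB.eigenvalues i * (y i) ^ 2 := by
    conv_lhs => rw [hB.spectral_theorem, Unitary.conjStarAlgAut_apply]
    rw [← hUdef, ← Matrix.mulVec_mulVec, ← Matrix.mulVec_mulVec, Matrix.dotProduct_mulVec,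
      hzy, ← hy]
    simp only [dotProduct, Matrix.mulVec_diagonal, Function.comp]
    exact Finset.sum_congr rfl fun i _ => by simp; ring
  rw [hBx, hxx]
  have h3 : μ * (y ⬝ᵥ y) = ∑ i, μ * (y i) ^ 2 := by
    simp [dotProduct, Finset.mul_sum, sq]
  rw [h3]
  exact Finset.sum_le_sum fun i _ => mul_le_mul_of_nonneg_right (hμ i) (sq_nonneg _)

lemma mono_step {c F2 a t : ℝ} (hc : 0 ≤ c) (ha : 0 ≤ a) (hat : a ≤ t)
    (htF : t ^ 2 ≤ F2) (hFa : F2 ≤ (c + 1) * a ^ 2) :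
    t + Real.sqrt (c * (F2 - t ^ 2)) ≤ a + Real.sqrt (c * (F2 - a ^ 2)) := by
  set u := Real.sqrt (c * (F2 - t ^ 2)) with hu
  set v := Real.sqrt (c * (F2 - a ^ 2)) with hv
  have hu0 : 0 ≤ u := Real.sqrt_nonneg _
  have hv0 : 0 ≤ v := Real.sqrt_nonneg _
  have ht2a2 : a ^ 2 ≤ t ^ 2 := by nlinarith
  have haF : a ^ 2 ≤ F2 := le_trans ht2a2 htF
  have hu2 : u ^ 2 = c * (F2 - t ^ 2) := Real.sq_sqrt (by nlinarith)
  have hv2 : v ^ 2 = c * (F2 - a ^ 2) := Real.sq_sqrt (by nlinarith)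
  have huv : u ≤ v :=
    Real.sqrt_le_sqrt (by nlinarith [mul_nonneg hc (sub_nonneg.2 ht2a2)])
  have hvca : v ≤ c * a := by
    have h1 : v ^ 2 ≤ (c * a) ^ 2 := by nlinarith
    nlinarith [sq_nonneg (v - c * a), mul_nonneg hc ha]
  rcases eq_or_lt_of_le (add_nonneg hu0 hv0) with h0 | h0
  · have hv' : v = 0 := by linarith
    have hu' : u = 0 := by linarith
    have h5 : c * (F2 - a ^ 2) = 0 := by rw [← hv2, hv']; ring
    have hFa2 : F2 = a ^ 2 := by
      rcases eq_or_lt_of_le hc with hc0 | hc0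
      · nlinarith
      · have h6 : F2 - a ^ 2 = 0 := by
          rcases mul_eq_zero.mp h5 with h | h
          · exact absurd h.symm (ne_of_lt hc0)
          · exact h
        linarith
    rw [hu', hv']
    nlinarith [sq_nonneg (t - a), mul_nonneg ha (sub_nonneg.2 hat)]
  · have hcat : c * a ≤ c * t := mul_le_mul_of_nonneg_left hat hc
    have h7 : u + v ≤ c * (t + a) := by linarith [mul_add c t a]
    have h8 : (t - a) * (u + v) ≤ (t - a) * (c * (t + a)) :=
      mul_le_mul_of_nonneg_left h7 (by linarith)
    have h9 : (v - u) * (u + v) = c * (t ^ 2 - a ^ 2) := by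
      have e : (v - u) * (u + v) = v ^ 2 - u ^ 2 := by ring
      rw [e, hu2, hv2]; ring
    have key : (t - a) * (u + v) ≤ (v - u) * (u + v) := by
      calc (t - a) * (u + v) ≤ (t - a) * (c * (t + a)) := h8
        _ = c * (t ^ 2 - a ^ 2) := by ring
        _ = (v - u) * (u + v) := h9.symm
    have := le_of_mul_le_mul_right key h0
    linarith

/-- For a nonnegative matrix with entries at most `1` and entry sum at least `n`:
`‖A‖_{S_1} ≤ |A|₁/√(mn) + √((m-1)(|A|₂² − |A|₁²/(mn)))`. -/
theorem trace_norm_le_nonneg {m n : ℕ} (hm : 1 ≤ m) (hmn : m ≤ n)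
    (A : Matrix (Fin m) (Fin n) ℝ) (hA : ∀ i j, 0 ≤ A i j) (h1 : ∀ i j, A i j ≤ 1)
    (hs : (n : ℝ) ≤ ∑ i, ∑ j, A i j) :
    ∑ i, svalR A i ≤
      (∑ i, ∑ j, A i j) / Real.sqrt ((m : ℝ) * n) +
        Real.sqrt (((m : ℝ) - 1) *
          ((∑ i, ∑ j, (A i j) ^ 2) - (∑ i, ∑ j, A i j) ^ 2 / ((m : ℝ) * n))) := by
  classical
  have hB : (A * A.conjTranspose).IsHermitian := Matrix.isHermitian_mul_conjTranspose_self A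
  set ev : Fin m → ℝ := hB.eigenvalues with hevdef
  set s : ℝ := ∑ i, ∑ j, A i j with hsdef
  set F2 : ℝ := ∑ i, ∑ j, (A i j) ^ 2 with hF2def
  have hm0 : (0:ℝ) < m := by exact_mod_cast hm
  have hn0 : (0:ℝ) < n := by exact_mod_cast lt_of_lt_of_le (by exact_mod_cast hm) hmn
  have hmn0 : (0:ℝ) < (m:ℝ) * n := mul_pos hm0 hn0
  have hs0 : (0:ℝ) ≤ s := le_trans (le_of_lt hn0) hs
  have hev0 : ∀ i, 0 ≤ ev i := fun i =>
    Matrix.eigenvalues_self_mul_conjTranspose_nonneg A i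
  -- trace identity
  have htr : ∑ i, ev i = F2 := by
    rw [hevdef, sum_eigen_eq_trace hB, hF2def]
    simp only [Matrix.trace, Matrix.diag, Matrix.mul_apply, Matrix.conjTranspose_apply,
      star_trivial, sq]
  -- max eigenvalue
  obtain ⟨k, -, hk⟩ := Finset.exists_max_image Finset.univ ev ⟨⟨0, hm⟩, Finset.mem_univ _⟩
  have hkF2 : ev k ≤ F2 := by
    rw [← htr]
    exact Finset.single_le_sum (fun i _ => hev0 i) (Finset.mem_univ k)
  -- Rayleigh lower bound for ev k
  set x : Fin m → ℝ := fun _ => 1 with hxdef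
  have hray := rayleigh_bound hB (fun i => hk i (Finset.mem_univ i)) x
  have hxx1 : x ⬝ᵥ x = (m : ℝ) := by
    simp [dotProduct, hxdef]
  have hquad : x ⬝ᵥ ((A * A.conjTranspose) *ᵥ x)
      = ∑ j, (∑ i, A i j) ^ 2 := by
    simp only [hxdef]
    simp only [dotProduct, Matrix.mulVec, Matrix.mul_apply,
      Matrix.conjTranspose_apply, star_trivial, one_mul, mul_one]
    rw [Finset.sum_comm]
    have e1 : ∀ y : Fin m, ∑ x : Fin m, ∑ j, A x j * A y j
        = ∑ j, ∑ x : Fin m, A x j * A y j := fun y => Finset.sum_comm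
    simp_rw [e1]
    rw [Finset.sum_comm]
    refine Finset.sum_congr rfl fun j _ => ?_
    calc ∑ y : Fin m, ∑ x : Fin m, A x j * A y j
        = ∑ y : Fin m, (∑ x : Fin m, A x j) * A y j :=
          Finset.sum_congr rfl fun y _ => (Finset.sum_mul _ _ _).symm
      _ = (∑ x : Fin m, A x j) * ∑ y : Fin m, A y j := (Finset.mul_sum _ _ _).symm
      _ = (∑ i : Fin m, A i j) ^ 2 := (sq _).symm
  -- Cauchy-Schwarz on column sums
  have hcol : s = ∑ j, ∑ i, A i j := by rw [hsdef]; exact Finset.sum_comm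
  have hCS : s ^ 2 ≤ (n : ℝ) * ∑ j, (∑ i, A i j) ^ 2 := by
    rw [hcol]
    have h := sq_sum_le_card_mul_sum_sq (s := (Finset.univ : Finset (Fin n)))
      (f := fun j => ∑ i, A i j)
    simpa using h
  have hevk_lb : s ^ 2 / ((m : ℝ) * n) ≤ ev k := by
    rw [hquad, hxx1] at hray
    rw [div_le_iff₀ hmn0]
    nlinarith [mul_le_mul_of_nonneg_left hray (le_of_lt hn0)]
  set a : ℝ := s / Real.sqrt ((m : ℝ) * n) with hadef
  have hsqrt2 : Real.sqrt ((m : ℝ) * n) ^ 2 = (m : ℝ) * n := Real.sq_sqrt (le_of_lt hmn0)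
  have ha2 : a ^ 2 = s ^ 2 / ((m : ℝ) * n) := by rw [hadef, div_pow, hsqrt2]
  have ha0 : 0 ≤ a := div_nonneg hs0 (Real.sqrt_nonneg _)
  have hat : a ≤ Real.sqrt (ev k) := by
    rw [Real.le_sqrt ha0 (hev0 k), ha2]
    exact hevk_lb
  -- tail sum bound
  set T : ℝ := ∑ i ∈ Finset.univ.erase k, Real.sqrt (ev i) with hTdef
  have hT0 : 0 ≤ T := Finset.sum_nonneg fun i _ => Real.sqrt_nonneg _
  have herase : ∑ i ∈ Finset.univ.erase k, ev i = F2 - ev k := by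
    have h := Finset.add_sum_erase Finset.univ ev (Finset.mem_univ k)
    rw [htr] at h
    linarith
  have hTsq : T ^ 2 ≤ ((m : ℝ) - 1) * (F2 - ev k) := by
    have h := sq_sum_le_card_mul_sum_sq (s := Finset.univ.erase k)
      (f := fun i => Real.sqrt (ev i))
    have hcard : (((Finset.univ.erase k)).card : ℝ) = (m : ℝ) - 1 := by
      rw [Finset.card_erase_of_mem (Finset.mem_univ k)]
      simp [Nat.cast_sub hm]
    have hsq : ∑ i ∈ Finset.univ.erase k, Real.sqrt (ev i) ^ 2
        = F2 - ev k := by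
      rw [← herase]
      exact Finset.sum_congr rfl fun i _ => Real.sq_sqrt (hev0 i)
    rw [hTdef]
    calc (∑ i ∈ Finset.univ.erase k, Real.sqrt (ev i)) ^ 2
        ≤ ((Finset.univ.erase k).card : ℝ) * ∑ i ∈ Finset.univ.erase k, Real.sqrt (ev i) ^ 2 :=
          h
      _ = ((m : ℝ) - 1) * (F2 - ev k) := by rw [hcard, hsq]
  have hFevk : 0 ≤ ((m : ℝ) - 1) * (F2 - ev k) := by
    have hm1 : (0:ℝ) ≤ (m : ℝ) - 1 := by
      have : (1:ℝ) ≤ m := by exact_mod_cast hm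
      linarith
    exact mul_nonneg hm1 (by linarith)
  have hTle : T ≤ Real.sqrt (((m : ℝ) - 1) * (F2 - ev k)) :=
    (Real.le_sqrt hT0 hFevk).mpr hTsq
  -- split the sum
  have hq : svalR A = fun i => Real.sqrt (ev i) := rfl
  have hsum : ∑ i, svalR A i = Real.sqrt (ev k) + T := by
    rw [hq, hTdef]
    exact (Finset.add_sum_erase Finset.univ _ (Finset.mem_univ k)).symm
  -- monotone step
  have hm1 : (0:ℝ) ≤ (m : ℝ) - 1 := by
    have : (1:ℝ) ≤ m := by exact_mod_cast hm
    linarith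
  have htsq : Real.sqrt (ev k) ^ 2 = ev k := Real.sq_sqrt (hev0 k)
  have hFa : F2 ≤ (((m : ℝ) - 1) + 1) * a ^ 2 := by
    have hF2s : F2 ≤ s := by
      rw [hF2def, hsdef]
      exact Finset.sum_le_sum fun i _ => Finset.sum_le_sum fun j _ => by
        nlinarith [hA i j, h1 i j]
    have h2 : (((m : ℝ) - 1) + 1) * a ^ 2 = s ^ 2 / n := by
      rw [ha2]
      field_simp
      ring
    rw [h2, le_div_iff₀ hn0, sq]
    exact mul_le_mul hF2s hs (le_of_lt hn0) hs0
  have htF' : Real.sqrt (ev k) ^ 2 ≤ F2 := by rw [htsq]; exact hkF2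
  have hmono := mono_step hm1 ha0 hat htF' hFa
  rw [htsq] at hmono
  calc ∑ i, svalR A i = Real.sqrt (ev k) + T := hsum
    _ ≤ Real.sqrt (ev k) + Real.sqrt (((m : ℝ) - 1) * (F2 - ev k)) := by linarith
    _ ≤ a + Real.sqrt (((m : ℝ) - 1) * (F2 - a ^ 2)) := hmono
    _ = a + Real.sqrt (((m : ℝ) - 1) * (F2 - s ^ 2 / ((m : ℝ) * n))) := by rw [ha2]
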